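/- Let ψ : (0,∞) → (0,∞) be continuously differentiable, positive and nondecreasing with lim_{y→∞} ψ'(y)·y^{γ}·e^{−β/y} = ∞. Then lim_{φ→∞} ψ(φ)·φ^{γ−1} = ∞; equivalently, ψ(φ)/φ^{1−γ} → ∞ as φ → ∞. -/

import Mathlib

set_option maxHeartbeats 1600000 in
/-- Growth estimate from the proof of Lemma 4.2: if `ψ : (0,∞) → (0,∞)` is
continuously differentiable, positive and nondecreasing with
`ψ'(y) y^γ e^(-β/y) → ∞` as `y → ∞`, then `ψ(φ) φ^(γ-1) → ∞` as `φ → ∞`. -/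
theorem psi_growth (γ β : ℝ) (hβ : 0 < β) (ψ : ℝ → ℝ)
    (hψsmooth : ContDiffOn ℝ 1 ψ (Set.Ioi (0 : ℝ)))
    (hψpos : ∀ y : ℝ, 0 < y → 0 < ψ y)
    (hψmono : ∀ x y : ℝ, 0 < x → x ≤ y → ψ x ≤ ψ y)
    (hψgrowth : Filter.Tendsto (fun y : ℝ => deriv ψ y * y ^ γ * Real.exp (-β / y))
      Filter.atTop Filter.atTop) :
    Filter.Tendsto (fun φ : ℝ => ψ φ * φ ^ (γ - 1)) Filter.atTop Filter.atTop := by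
  rw [Filter.tendsto_atTop]
  intro M
  set c₀ : ℝ := min 1 (2 ^ γ : ℝ) with hc₀def
  have h2γ : (0:ℝ) < (2:ℝ) ^ γ := Real.rpow_pos_of_pos two_pos γ
  have hc₀ : 0 < c₀ := lt_min one_pos h2γ
  set K : ℝ := 2 * (|M| + 1) / c₀ with hKdef
  have hK : 0 < K := by positivity
  obtain ⟨R, hR⟩ := Filter.eventually_atTop.1 (hψgrowth.eventually_ge_atTop K)
  filter_upwards [Filter.eventually_ge_atTop (max (2 * R) 2)] with φ hφ
  have hφ2 : (2:ℝ) ≤ φ := le_trans (le_max_right _ _) hφ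
  have hφR : 2 * R ≤ φ := le_trans (le_max_left _ _) hφ
  have hφpos : (0:ℝ) < φ := by linarith
  have hhalf : (1:ℝ) ≤ φ / 2 := by linarith
  have hhalfpos : (0:ℝ) < φ / 2 := by linarith
  have hhalflt : φ / 2 < φ := by linarith
  have hRhalf : R ≤ φ / 2 := by linarith
  -- MVT on [φ/2, φ]
  have hsub : Set.Icc (φ / 2) φ ⊆ Set.Ioi (0:ℝ) := fun x hx => lt_of_lt_of_le hhalfpos hx.1
  have hcont : ContinuousOn ψ (Set.Icc (φ / 2) φ) := (hψsmooth.continuousOn).mono hsub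
  have hdiff : DifferentiableOn ℝ ψ (Set.Ioo (φ / 2) φ) :=
    (hψsmooth.differentiableOn one_ne_zero).mono fun x hx => hsub (Set.Ioo_subset_Icc_self hx)
  obtain ⟨c, hc, hceq⟩ := exists_deriv_eq_slope ψ hhalflt hcont hdiff
  have hcpos : 0 < c := lt_trans hhalfpos hc.1
  -- lower bound on deriv ψ c
  have hcK : K ≤ deriv ψ c * c ^ γ * Real.exp (-β / c) := hR c (le_trans hRhalf hc.1.le)
  have hcγ : (0:ℝ) < c ^ γ := Real.rpow_pos_of_pos hcpos γ
  have hexp1 : Real.exp (-β / c) ≤ 1 := by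
    rw [Real.exp_le_one_iff]
    have : 0 < β / c := div_pos hβ hcpos
    rw [neg_div]; linarith
  have hexppos : 0 < Real.exp (-β / c) := Real.exp_pos _
  have hderivpos : 0 < deriv ψ c := by
    by_contra h
    push_neg at h
    have h1 : deriv ψ c * c ^ γ ≤ 0 := mul_nonpos_of_nonpos_of_nonneg h hcγ.le
    have h2 : deriv ψ c * c ^ γ * Real.exp (-β / c) ≤ 0 :=
      mul_nonpos_of_nonpos_of_nonneg h1 hexppos.le
    linarith
  have hψ'c : K / c ^ γ ≤ deriv ψ c := by
    rw [div_le_iff₀ hcγ]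
    nlinarith
  -- c^(-γ) comparison: c ^ γ ≤ φ ^ γ / c₀  i.e.  c₀ * c ^ γ ≤ φ ^ γ? careful:
  have hφγ : (0:ℝ) < φ ^ γ := Real.rpow_pos_of_pos hφpos γ
  have hkey : c₀ * c ^ γ ≤ φ ^ γ := by
    rcases le_or_gt 0 γ with hγ | hγ
    · have h1 : c ^ γ ≤ φ ^ γ := Real.rpow_le_rpow hcpos.le hc.2.le hγ
      have : c₀ ≤ 1 := min_le_left _ _
      nlinarith
    · have h2 : c ^ γ ≤ (φ / 2) ^ γ :=
        Real.rpow_le_rpow_of_nonpos hhalfpos hc.1.le hγ.le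
      have h3 : ((φ:ℝ) / 2) ^ γ = φ ^ γ / 2 ^ γ := Real.div_rpow hφpos.le (by norm_num) γ
      have h4 : c₀ ≤ (2:ℝ) ^ γ := min_le_right _ _
      rw [h3, le_div_iff₀ h2γ] at h2
      nlinarith
  -- lower bound via MVT
  have hψφhalf : 0 < ψ (φ / 2) := hψpos _ hhalfpos
  have hslope : ψ φ - ψ (φ / 2) = deriv ψ c * (φ - φ / 2) := by
    have hne : φ - φ / 2 ≠ 0 := by linarith
    rw [eq_div_iff hne] at hceq
    linarith [hceq]
  have hψφ : K * c₀ / φ ^ γ * (φ / 2) ≤ ψ φ := by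
    have hd : K * c₀ / φ ^ γ ≤ deriv ψ c := by
      refine le_trans ?_ hψ'c
      rw [div_le_div_iff₀ hφγ hcγ]
      nlinarith
    have : K * c₀ / φ ^ γ * (φ / 2) ≤ deriv ψ c * (φ / 2) := by
      apply mul_le_mul_of_nonneg_right hd (by linarith)
    have h6 : deriv ψ c * (φ - φ / 2) = deriv ψ c * (φ / 2) := by ring_nf
    nlinarith [hslope]
  have hφγ1 : φ ^ (γ - 1) = φ ^ γ / φ := by
    rw [Real.rpow_sub hφpos, Real.rpow_one]
  have hfin : (|M| + 1) ≤ ψ φ * φ ^ (γ - 1) := by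
    have hψφpos : 0 < ψ φ := hψpos _ hφpos
    have hBpos : 0 < φ ^ (γ - 1) := Real.rpow_pos_of_pos hφpos _
    have step : K * c₀ / φ ^ γ * (φ / 2) * φ ^ (γ - 1) ≤ ψ φ * φ ^ (γ - 1) :=
      mul_le_mul_of_nonneg_right hψφ hBpos.le
    have hKc : K * c₀ = 2 * (|M| + 1) := by
      rw [hKdef]; field_simp
    have hval : K * c₀ / φ ^ γ * (φ / 2) * φ ^ (γ - 1) = |M| + 1 := by
      rw [hφγ1]
      have hφne : φ ≠ 0 := hφpos.ne'
      have hφγne : φ ^ γ ≠ 0 := hφγ.ne'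
      have hc₀ne : c₀ ≠ 0 := hc₀.ne'
      rw [hKdef]
      field_simp
    linarith [step, hval.ge]
  linarith [hfin, le_abs_self M]
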